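/- arXiv:2412.11633 — 2 statements merged into one kernel-verified Lean document; each statement's English description precedes it below -/
import Mathlib

section
/- Let Φ be the non-selective measurement channel associated with a complete family of pairwise orthogonal projections {P_a} on ℂ^n, let ρ be a quantum state on ℂ^n, and let σ be a quantum state on ℂ^m. Then ‖ρ ⊗ σ − Φ(ρ) ⊗ σ‖₂² = ‖ρ − Φ(ρ)‖₂² · Tr(σ²). Consequently, if σ is not pure (Tr(σ²) < 1) and Φ(ρ) ≠ ρ, the squared Hilbert–Schmidt distance strictly decreases upon adding the uncorrelated state σ: ‖ρ ⊗ σ − Φ(ρ) ⊗ σ‖₂² < ‖ρ − Φ(ρ)‖₂². -/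
open Matrix Kronecker
open scoped ComplexOrder

noncomputable section

variable {n : Type*} [Fintype n] [DecidableEq n]

/-- `|X| = (X† X)^{1/2}`, the positive semidefinite absolute value of a matrix. -/
def matAbs (X : Matrix n n ℂ) : Matrix n n ℂ :=
  (Matrix.posSemidef_conjTranspose_mul_self X).1.eigenvectorUnitary.1 *
    Matrix.diagonal ((↑) ∘ (√·) ∘ (Matrix.posSemidef_conjTranspose_mul_self X).1.eigenvalues) *
    (star (Matrix.posSemidef_conjTranspose_mul_self X).1.eigenvectorUnitary : Matrix n n ℂ)

/-- `Tr |X|^p`, with the `p`-th power taken through the functional calculus. -/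
def traceAbsPow (p : ℝ) (X : Matrix n n ℂ) : ℝ :=
  (Matrix.trace (cfc (fun x : ℝ => x ^ p) (matAbs X))).re

/-- The Schatten `p`-norm `‖X‖_p = (Tr |X|^p)^(1/p)`. -/
def schatten (p : ℝ) (X : Matrix n n ℂ) : ℝ :=
  (traceAbsPow p X) ^ (1 / p)

/-- Matrix square root via the functional calculus (agrees with the positive semidefinite
square root on positive semidefinite matrices). -/
def msqrt (X : Matrix n n ℂ) : Matrix n n ℂ := cfc Real.sqrt X

/-- Matrix natural logarithm via the functional calculus. -/
def mlog (X : Matrix n n ℂ) : Matrix n n ℂ := cfc Real.log X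

/-- Von Neumann entropy `S(ρ) = -Tr(ρ log ρ)`. -/
def vnEntropy (ρ : Matrix n n ℂ) : ℝ := -(Matrix.trace (ρ * mlog ρ)).re

/-- Relative entropy `S(ρ‖σ) = Tr(ρ log ρ) - Tr(ρ log σ)`. -/
def relEnt (ρ σ : Matrix n n ℂ) : ℝ :=
  (Matrix.trace (ρ * mlog ρ)).re - (Matrix.trace (ρ * mlog σ)).re

/-- Uhlmann fidelity `F(ρ,σ) = (Tr|√σ √ρ|)²`. -/
def fidelity (ρ σ : Matrix n n ℂ) : ℝ :=
  ((Matrix.trace (matAbs (msqrt σ * msqrt ρ))).re) ^ 2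

/-- Partial trace over the second factor. -/
def ptraceE {S E : Type*} [Fintype E] (Ω : Matrix (S × E) (S × E) ℂ) : Matrix S S ℂ :=
  Matrix.of fun s s' => ∑ e, Ω (s, e) (s', e)

/-- Partial trace over the first factor. -/
def ptraceS {S E : Type*} [Fintype S] (Ω : Matrix (S × E) (S × E) ℂ) : Matrix E E ℂ :=
  Matrix.of fun e e' => ∑ s, Ω (s, e) (s, e')


lemma traceCT {k l : Type*} [Fintype k] [Fintype l] (X : Matrix k l ℂ) :
    Matrix.trace (Xᴴ * X) = ((∑ j, ∑ i, Complex.normSq (X i j) : ℝ) : ℂ) := by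
  simp only [Matrix.trace, Matrix.diag, Matrix.mul_apply, Matrix.conjTranspose_apply]
  push_cast
  refine Finset.sum_congr rfl fun j _ => Finset.sum_congr rfl fun i _ => ?_
  rw [show star (X i j) = (starRingEnd ℂ) (X i j) from rfl, mul_comm, Complex.mul_conj]

lemma cfc_sq_matAbs (X : Matrix n n ℂ) :
    cfc (fun x : ℝ => x ^ (2:ℝ)) (matAbs X) = Xᴴ * X := by
  have hps : (matAbs X).PosSemidef :=
    by
      have hd : (Matrix.diagonal ((↑) ∘ (√·) ∘
          (Matrix.posSemidef_conjTranspose_mul_self X).1.eigenvalues) : Matrix n n ℂ).PosSemidef :=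
        Matrix.posSemidef_diagonal_iff.mpr fun i => Complex.zero_le_real.mpr (Real.sqrt_nonneg _)
      have := hd.mul_mul_conjTranspose_same
        ((Matrix.posSemidef_conjTranspose_mul_self X).1.eigenvectorUnitary.1)
      unfold matAbs
      exact this
  have hsa : IsSelfAdjoint (matAbs X) := hps.isHermitian
  have hfun : (fun x : ℝ => x ^ (2:ℝ)) = fun x => x * x := by
    funext x
    rw [show (2:ℝ) = ((2:ℕ):ℝ) by norm_num, Real.rpow_natCast]; ring
  rw [hfun]
  calc cfc (fun x : ℝ => x * x) (matAbs X)
      = cfc (fun x : ℝ => x) (matAbs X) * cfc (fun x : ℝ => x) (matAbs X) := cfc_mul _ _ _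
    _ = matAbs X * matAbs X := by rw [cfc_id' ℝ (matAbs X)]
    _ = Xᴴ * X := by
      have hX := Matrix.posSemidef_conjTranspose_mul_self X
      set U := hX.1.eigenvectorUnitary
      have hU : (star U : Matrix n n ℂ) * U.1 = 1 := Unitary.coe_star_mul_self U
      have hD : Matrix.diagonal ((↑) ∘ (√·) ∘ hX.1.eigenvalues) *
          Matrix.diagonal ((↑) ∘ (√·) ∘ hX.1.eigenvalues)
          = Matrix.diagonal (RCLike.ofReal ∘ hX.1.eigenvalues : n → ℂ) := by
        rw [Matrix.diagonal_mul_diagonal]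
        congr 1
        funext i
        simp only [Function.comp_apply]
        rw [← Complex.ofReal_mul, Real.mul_self_sqrt (hX.eigenvalues_nonneg i)]
        rfl
      have hs := hX.1.spectral_theorem
      unfold matAbs
      calc _ = U.1 * (Matrix.diagonal ((↑) ∘ (√·) ∘ hX.1.eigenvalues) *
            ((star U : Matrix n n ℂ) * U.1) *
            Matrix.diagonal ((↑) ∘ (√·) ∘ hX.1.eigenvalues)) * (star U : Matrix n n ℂ) := by
              simp only [Matrix.mul_assoc]
              rfl
        _ = Xᴴ * X := by
          rw [hU, Matrix.mul_one, hD]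
          conv_rhs => rw [hs]
          simp [Unitary.conjStarAlgAut_apply]
          rfl

lemma schatten_two_sq (X : Matrix n n ℂ) :
    schatten 2 X ^ 2 = ∑ j, ∑ i, Complex.normSq (X i j) := by
  have ht : traceAbsPow 2 X = ∑ j, ∑ i, Complex.normSq (X i j) := by
    rw [traceAbsPow, cfc_sq_matAbs, traceCT, Complex.ofReal_re]
  have hnn : (0:ℝ) ≤ ∑ j, ∑ i, Complex.normSq (X i j) :=
    Finset.sum_nonneg fun j _ => Finset.sum_nonneg fun i _ => Complex.normSq_nonneg _
  rw [schatten, ht, ← Real.rpow_natCast (_ ^ (1/(2:ℝ))) 2, ← Real.rpow_mul hnn]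
  norm_num

lemma kron_conjTranspose {N M : Type*} (A : Matrix N N ℂ) (B : Matrix M M ℂ) :
    (A ⊗ₖ B)ᴴ = Aᴴ ⊗ₖ Bᴴ := by
  ext ⟨i, j⟩ ⟨k, l⟩
  simp [Matrix.conjTranspose_apply, Matrix.kroneckerMap_apply, star_mul']

/-- Adding an uncorrelated state `σ` rescales the squared Hilbert-Schmidt distance by
`Tr(σ²)`; in particular it strictly decreases when `σ` is not pure and `Φ(ρ) ≠ ρ`. -/
theorem hilbertSchmidt_kron_uncorrelated
    {n m ι : Type*} [Fintype n] [DecidableEq n] [Fintype m] [DecidableEq m] [Fintype ι]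
    (P : ι → Matrix n n ℂ)
    (hproj : ∀ a, P a * P a = P a)
    (hherm : ∀ a, (P a)ᴴ = P a)
    (horth : ∀ a b, a ≠ b → P a * P b = 0)
    (hsum : ∑ a, P a = 1)
    (ρ : Matrix n n ℂ) (hρ : ρ.PosSemidef) (hρtr : ρ.trace = 1)
    (σ : Matrix m m ℂ) (hσ : σ.PosSemidef) (hσtr : σ.trace = 1) :
    schatten 2 (ρ ⊗ₖ σ - (∑ a, P a * ρ * P a) ⊗ₖ σ) ^ 2
      = schatten 2 (ρ - ∑ a, P a * ρ * P a) ^ 2 * (Matrix.trace (σ * σ)).re ∧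
    ((Matrix.trace (σ * σ)).re < 1 → (∑ a, P a * ρ * P a) ≠ ρ →
      schatten 2 (ρ ⊗ₖ σ - (∑ a, P a * ρ * P a) ⊗ₖ σ) ^ 2
        < schatten 2 (ρ - ∑ a, P a * ρ * P a) ^ 2) := by
  set D := ρ - ∑ a, P a * ρ * P a with hD
  have hkron : ρ ⊗ₖ σ - (∑ a, P a * ρ * P a) ⊗ₖ σ = D ⊗ₖ σ := by
    ext ⟨i, j⟩ ⟨k, l⟩
    simp [Matrix.kroneckerMap_apply, hD, Matrix.sub_apply, sub_mul]
  have hσH : σᴴ = σ := hσ.1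
  have htr2 : (Matrix.trace (σ * σ)).re = ∑ j, ∑ i, Complex.normSq (σ i j) := by
    have h := traceCT σ
    rw [hσH] at h
    rw [h, Complex.ofReal_re]
  have h1 : Matrix.trace ((D ⊗ₖ σ)ᴴ * (D ⊗ₖ σ))
      = Matrix.trace (Dᴴ * D) * Matrix.trace (σᴴ * σ) := by
    rw [kron_conjTranspose, ← Matrix.mul_kronecker_mul, Matrix.trace_kronecker]
  have h2 : (∑ j, ∑ i, Complex.normSq ((D ⊗ₖ σ) i j))
      = (∑ j, ∑ i, Complex.normSq (D i j)) * (∑ j, ∑ i, Complex.normSq (σ i j)) := by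
    rw [traceCT, traceCT, traceCT] at h1
    exact_mod_cast h1
  have hEq : schatten 2 (ρ ⊗ₖ σ - (∑ a, P a * ρ * P a) ⊗ₖ σ) ^ 2
      = schatten 2 D ^ 2 * (Matrix.trace (σ * σ)).re := by
    rw [hkron, schatten_two_sq, schatten_two_sq, h2, htr2]
  refine ⟨hEq, fun hlt hne => ?_⟩
  rw [hEq, schatten_two_sq]
  have hDne : D ≠ 0 := sub_ne_zero.mpr (Ne.symm hne)
  obtain ⟨i, j, hij⟩ : ∃ i j, D i j ≠ 0 := by
    by_contra h
    push_neg at h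
    exact hDne (by ext i j; simpa using h i j)
  have hpos : 0 < ∑ j, ∑ i, Complex.normSq (D i j) := by
    calc (0:ℝ) < Complex.normSq (D i j) := Complex.normSq_pos.mpr hij
      _ ≤ ∑ i, Complex.normSq (D i j) :=
        Finset.single_le_sum (f := fun i => Complex.normSq (D i j))
          (fun _ _ => Complex.normSq_nonneg _) (Finset.mem_univ i)
      _ ≤ ∑ j, ∑ i, Complex.normSq (D i j) :=
        Finset.single_le_sum (f := fun j => ∑ i, Complex.normSq (D i j))
          (fun j _ => Finset.sum_nonneg fun i _ => Complex.normSq_nonneg _) (Finset.mem_univ j)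
  exact mul_lt_of_lt_one_right hpos hlt
end
end

section
/- Let ρ_ε := (1−ε)·1₄/4 + ε·|φ⁺⟩⟨φ⁺| be the two-qubit Werner state, where |φ⁺⟩ := (|00⟩+|11⟩)/√2 and 0 ≤ ε ≤ 1, and let Φ be the local σ_z-measurement on the first qubit, Φ(X) := Σ_{a∈{0,1}} (E_aa ⊗ 1₂) X (E_aa ⊗ 1₂). Then the trace distance appearing in the trace-distance realism monotone satisfies Tr|ρ_ε − (1/2)·Φ(ρ_ε)| = 1/2 for 0 ≤ ε ≤ 1/3, and Tr|ρ_ε − (1/2)·Φ(ρ_ε)| = (1+3ε)/4 for 1/3 ≤ ε ≤ 1. -/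
open Matrix Kronecker
open scoped ComplexOrder

noncomputable section

variable {n : Type*} [Fintype n] [DecidableEq n]

/-- The two-qubit maximally entangled vector `|φ⁺⟩ = (|00⟩ + |11⟩)/√2`. -/
def phiPlus : Fin 2 × Fin 2 → ℂ :=
  fun x => if x.1 = x.2 then ((Real.sqrt 2 : ℝ) : ℂ)⁻¹ else 0

/-- The Werner state `ρ_ε = (1-ε)·1₄/4 + ε·|φ⁺⟩⟨φ⁺|`. -/
def werner (ε : ℝ) : Matrix (Fin 2 × Fin 2) (Fin 2 × Fin 2) ℂ :=
  (((1 - ε) / 4 : ℝ) : ℂ) • (1 : Matrix (Fin 2 × Fin 2) (Fin 2 × Fin 2) ℂ)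
    + (ε : ℂ) • Matrix.vecMulVec phiPlus (star phiPlus)

/-- The local `σ_z`-measurement on the first qubit. -/
def measZ (X : Matrix (Fin 2 × Fin 2) (Fin 2 × Fin 2) ℂ) :
    Matrix (Fin 2 × Fin 2) (Fin 2 × Fin 2) ℂ :=
  ∑ a : Fin 2,
    (Matrix.single a a (1 : ℂ) ⊗ₖ (1 : Matrix (Fin 2) (Fin 2) ℂ)) * X *
      (Matrix.single a a (1 : ℂ) ⊗ₖ (1 : Matrix (Fin 2) (Fin 2) ℂ))


namespace WernerAux

def uu : Fin 2 × Fin 2 → ℂ := fun p => if p.1 = p.2 then 1 else 0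
def PP : Matrix (Fin 2 × Fin 2) (Fin 2 × Fin 2) ℂ := Matrix.vecMulVec uu uu
def Dm (a b : ℝ) : Matrix (Fin 2 × Fin 2) (Fin 2 × Fin 2) ℂ :=
  Matrix.diagonal (fun p => if p.1 = p.2 then (a : ℂ) else (b : ℂ))

lemma PP_psd : PP.PosSemidef := by
  have : PP = Matrix.replicateCol (Fin 1) uu * (Matrix.replicateCol (Fin 1) uu)ᴴ := by
    ext p q
    simp [PP, Matrix.vecMulVec_apply, Matrix.mul_apply, Matrix.replicateCol_apply,
      Matrix.conjTranspose_apply, uu]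
  rw [this]
  exact Matrix.posSemidef_self_mul_conjTranspose _

lemma Dm_herm (a b : ℝ) : (Dm a b).IsHermitian := by
  unfold Matrix.IsHermitian Dm
  rw [Matrix.diagonal_conjTranspose]
  refine congrArg Matrix.diagonal ?_
  funext p
  show star (if p.1 = p.2 then (a:ℂ) else b) = _
  split <;> simp

lemma Dm_psd {a b : ℝ} (ha : 0 ≤ a) (hb : 0 ≤ b) : (Dm a b).PosSemidef := by
  refine Matrix.posSemidef_diagonal_iff.mpr fun i => ?_
  split <;> [exact_mod_cast ha; exact_mod_cast hb]

lemma psd_smul {A : Matrix (Fin 2 × Fin 2) (Fin 2 × Fin 2) ℂ} (hA : A.PosSemidef)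
    {c : ℝ} (hc : 0 ≤ c) : ((c : ℂ) • A).PosSemidef := by
  refine Matrix.posSemidef_iff_dotProduct_mulVec.mpr ⟨?_, ?_⟩
  · unfold Matrix.IsHermitian
    rw [Matrix.conjTranspose_smul, hA.1.eq]
    simp
  · intro x
    rw [Matrix.smul_mulVec, dotProduct_smul]
    rw [smul_eq_mul]
    exact mul_nonneg (by exact_mod_cast hc) ((Matrix.posSemidef_iff_dotProduct_mulVec.mp hA).2 x)

lemma form_herm (a b c : ℝ) : (Dm a b + (c : ℂ) • PP).IsHermitian := by
  refine (Dm_herm a b).add ?_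
  unfold Matrix.IsHermitian
  rw [Matrix.conjTranspose_smul, PP_psd.1.eq]
  simp

lemma form_psd {a b c : ℝ} (ha : 0 ≤ a) (hb : 0 ≤ b) (hc : 0 ≤ c) :
    (Dm a b + (c : ℂ) • PP).PosSemidef :=
  (Dm_psd ha hb).add (psd_smul PP_psd hc)

lemma PP_mul_PP : PP * PP = (2 : ℂ) • PP := by
  ext p q
  simp only [PP, Matrix.mul_apply, Matrix.vecMulVec_apply, Matrix.smul_apply, smul_eq_mul, uu]
  rw [Fintype.sum_prod_type]
  simp [Fin.sum_univ_two]

lemma Dm_mul_PP (a b : ℝ) : Dm a b * PP = (a : ℂ) • PP := by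
  ext p q
  simp only [Dm, PP, Matrix.diagonal_mul, Matrix.smul_apply, Matrix.vecMulVec_apply, uu,
    smul_eq_mul, Matrix.of_apply]
  split <;> split <;> simp

lemma PP_mul_Dm (a b : ℝ) : PP * Dm a b = (a : ℂ) • PP := by
  ext p q
  simp only [Dm, PP, Matrix.mul_diagonal, Matrix.smul_apply, Matrix.vecMulVec_apply, uu,
    smul_eq_mul, Matrix.of_apply]
  split <;> split <;> simp

lemma Dm_mul_Dm (a b c d : ℝ) : Dm a b * Dm c d = Dm (a*c) (b*d) := by
  simp only [Dm, Matrix.diagonal_mul_diagonal]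
  refine congrArg Matrix.diagonal ?_
  funext p; split <;> push_cast <;> ring

lemma trace_form (a b c : ℝ) :
    (Matrix.trace (Dm a b + (c : ℂ) • PP)).re = 2*a + 2*b + 2*c := by
  simp only [Matrix.trace, Matrix.diag, Matrix.add_apply, Matrix.smul_apply, Dm, PP,
    Matrix.diagonal_apply_eq, Matrix.vecMulVec_apply, uu, smul_eq_mul]
  rw [Fintype.sum_prod_type]
  simp [Fin.sum_univ_two]
  ring

lemma sq_form (a b c : ℝ) :
    (Dm a b + (c : ℂ) • PP) * (Dm a b + (c : ℂ) • PP)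
      = Dm (a^2) (b^2) + ((2*a*c + 2*c^2 : ℝ) : ℂ) • PP := by
  rw [add_mul, mul_add, mul_add, Matrix.smul_mul, Matrix.smul_mul, Matrix.mul_smul,
    Matrix.mul_smul, Dm_mul_Dm, Dm_mul_PP, PP_mul_Dm, PP_mul_PP]
  rw [smul_smul, smul_smul, smul_smul]
  rw [add_assoc, ← add_smul, ← add_smul]
  have h1 : a * a = a ^ 2 := by ring
  have h2 : b * b = b ^ 2 := by ring
  have h3 : (c:ℂ) * a + ((c:ℂ) * a + (c:ℂ) * c * 2) = ((2*a*c + 2*c^2 : ℝ) : ℂ) := by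
    push_cast; ring
  rw [h1, h2, h3]

lemma sqrt2_inv_sq : (((Real.sqrt 2 : ℝ) : ℂ))⁻¹ * (((Real.sqrt 2 : ℝ) : ℂ))⁻¹ = 2⁻¹ := by
  have h : (Real.sqrt 2)⁻¹ * (Real.sqrt 2)⁻¹ = (2:ℝ)⁻¹ := by
    rw [← mul_inv, Real.mul_self_sqrt (by norm_num : (0:ℝ) ≤ 2)]
  rw [← Complex.ofReal_inv, ← Complex.ofReal_mul, h]; norm_num

lemma X_eq (ε : ℝ) :
    werner ε - (2:ℂ)⁻¹ • measZ (werner ε)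
      = Dm ((1-3*ε)/8) ((1-ε)/8) + ((ε/2 : ℝ) : ℂ) • PP := by
  ext ⟨i, j⟩ ⟨k, l⟩
  simp only [werner, measZ, phiPlus, Dm, PP, uu, Matrix.sub_apply, Matrix.add_apply,
    Matrix.smul_apply, Matrix.sum_apply, Matrix.mul_apply, Matrix.kroneckerMap_apply,
    Matrix.single_apply, Matrix.one_apply, Matrix.vecMulVec_apply, Matrix.diagonal_apply,
    Matrix.of_apply, Fintype.sum_prod_type, Fin.sum_univ_two, Pi.star_apply, smul_eq_mul]
  fin_cases i <;> fin_cases j <;> fin_cases k <;> fin_cases l <;>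
    simp [sqrt2_inv_sq, Prod.ext_iff] <;> ring

lemma matAbs_eq {X M : Matrix (Fin 2 × Fin 2) (Fin 2 × Fin 2) ℂ}
    (hM : M.PosSemidef) (h : M ^ 2 = Xᴴ * X) : matAbs X = M := by
  open scoped MatrixOrder in
  have hX := Matrix.posSemidef_conjTranspose_mul_self X
  have h1 : matAbs X = cfc Real.sqrt (Xᴴ * X) := by
    rw [hX.1.cfc_eq]; rfl
  have h0 : (0 : Matrix (Fin 2 × Fin 2) (Fin 2 × Fin 2) ℂ) ≤ M := hM.nonneg
  have h0' : (0 : Matrix (Fin 2 × Fin 2) (Fin 2 × Fin 2) ℂ) ≤ Xᴴ * X := hX.nonneg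
  rw [h1, ← cfcₙ_eq_cfc (hf0 := Real.sqrt_zero), ← CFC.sqrt_eq_real_sqrt _ h0', ← h, pow_two]
  exact CFC.sqrt_mul_self M h0

end WernerAux

open WernerAux in
/-- The trace norm `Tr|ρ_ε - Φ(ρ_ε)/2|` for the Werner state equals `1/2` on `[0,1/3]`
and `(1+3ε)/4` on `[1/3,1]`. -/
theorem werner_traceNorm_realism
    (ε : ℝ) (h0 : 0 ≤ ε) (h1 : ε ≤ 1) :
    (ε ≤ 1 / 3 →
      (Matrix.trace (matAbs (werner ε - (2 : ℂ)⁻¹ • measZ (werner ε)))).re = 1 / 2) ∧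
    (1 / 3 ≤ ε →
      (Matrix.trace (matAbs (werner ε - (2 : ℂ)⁻¹ • measZ (werner ε)))).re
        = (1 + 3 * ε) / 4) := by
  constructor
  · intro hle
    have ha : (0:ℝ) ≤ (1-3*ε)/8 := by linarith
    have hb : (0:ℝ) ≤ (1-ε)/8 := by linarith
    have hc : (0:ℝ) ≤ ε/2 := by linarith
    have hpsd := form_psd ha hb hc
    have hXabs : matAbs (werner ε - (2 : ℂ)⁻¹ • measZ (werner ε))
        = Dm ((1-3*ε)/8) ((1-ε)/8) + ((ε/2 : ℝ) : ℂ) • PP := by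
      refine matAbs_eq hpsd ?_
      rw [X_eq ε, (form_herm ((1-3*ε)/8) ((1-ε)/8) (ε/2)).eq, pow_two]
    rw [hXabs, trace_form]
    linarith
  · intro hge
    have ha : (0:ℝ) ≤ (3*ε-1)/8 := by linarith
    have hb : (0:ℝ) ≤ (1-ε)/8 := by linarith
    have hc : (0:ℝ) ≤ (1+ε)/8 := by linarith
    have hpsd := form_psd ha hb hc
    have hXabs : matAbs (werner ε - (2 : ℂ)⁻¹ • measZ (werner ε))
        = Dm ((3*ε-1)/8) ((1-ε)/8) + (((1+ε)/8 : ℝ) : ℂ) • PP := by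
      refine matAbs_eq hpsd ?_
      rw [X_eq ε, (form_herm ((1-3*ε)/8) ((1-ε)/8) (ε/2)).eq]
      rw [pow_two, sq_form, sq_form]
      have h1 : ((3*ε-1)/8)^2 = ((1-3*ε)/8)^2 := by ring
      have h2 : 2*((3*ε-1)/8)*((1+ε)/8) + 2*((1+ε)/8)^2
          = 2*((1-3*ε)/8)*(ε/2) + 2*(ε/2)^2 := by ring
      rw [h1, h2]
    rw [hXabs, trace_form]
    linarith
end
end
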